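/- Let V = E₀ ⊕ ⋯ ⊕ E_s be a direct-sum decomposition of V into nonzero subspaces with s ≥ 1 and dim E₀ = 1. Let 0 ≤ i ≤ s and let x̄, ȳ ∈ P(V) ∖ P(V⁰) (so x̄, ȳ ∉ P(Vⁱ) and the projective points P_{(Vⁱ)^⊥} x̄, P_{(Vⁱ)^⊥} ȳ are defined; for i = s interpret P_{(Vⁱ)^⊥} as the identity). Then P_{(Vⁱ)^⊥} x̄ = P_{(Vⁱ)^⊥} ȳ if and only if gᵏ(x̄) = gᵏ(ȳ) for all 0 ≤ k ≤ i. -/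

import Mathlib

open scoped RealInnerProductSpace
open Filter

set_option synthInstance.maxHeartbeats 1000000
set_option maxHeartbeats 1000000

variable {V : Type*} [NormedAddCommGroup V] [InnerProductSpace ℝ V]

/-- The projective distance between the lines spanned by two nonzero vectors:
`d(x̄, ȳ) = (1 − ⟨x,y⟫²/(|x|²|y|²))^{1/2}`. -/
noncomputable def projDist (x y : V) : ℝ :=
  Real.sqrt (1 - ⟪x, y⟫ ^ 2 / (‖x‖ ^ 2 * ‖y‖ ^ 2))

/-- The distance `d(x̄, P(W))` from the line spanned by `x` to the projective space of the
submodule `W`. -/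
noncomputable def projDistToSub (x : V) (W : Submodule ℝ V) : ℝ :=
  sInf {r : ℝ | ∃ y : V, y ∈ W ∧ y ≠ 0 ∧ r = projDist x y}

/-- `κ(E₀,…,E_s)`: the minimal projective distance between nonzero vectors lying in sums of
disjoint subfamilies of the `E i`. -/
noncomputable def kappa {ι : Type*} (E : ι → Submodule ℝ V) : ℝ :=
  sInf {r : ℝ | ∃ (I J : Finset ι) (x y : V), I.Nonempty ∧ J.Nonempty ∧ Disjoint I J ∧
    x ∈ (⨆ i ∈ I, E i) ∧ x ≠ 0 ∧ y ∈ (⨆ j ∈ J, E j) ∧ y ≠ 0 ∧ r = projDist x y}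

/-- `Vⁱ = E_{i+1} ⊕ ⋯ ⊕ E_s`. -/
noncomputable def Vlow {s : ℕ} (E : Fin (s+1) → Submodule ℝ V) (i : ℕ) : Submodule ℝ V :=
  ⨆ j : Fin (s+1), ⨆ _ : i < (j : ℕ), E j

/-- `Wⁱ = E₀ ⊕ ⋯ ⊕ E_i`. -/
noncomputable def Whigh {s : ℕ} (E : Fin (s+1) → Submodule ℝ V) (i : ℕ) : Submodule ℝ V :=
  ⨆ j : Fin (s+1), ⨆ _ : (j : ℕ) ≤ i, E j

/-- `‖x ∧ y‖ = (|x|²|y|² − ⟨x,y⟫²)^{1/2}`, the area of the parallelogram spanned by `x, y`. -/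
theorem uniq_comp {s : ℕ} (E : Fin (s+1) → Submodule ℝ V) (hE : DirectSum.IsInternal E)
    (v : Fin (s+1) → V) (hv : ∀ k, v k ∈ E k) (hsum : ∑ k, v k = 0) : ∀ k, v k = 0 := by
  set w : DirectSum (Fin (s+1)) (fun k => E k) := ∑ k, DirectSum.of (fun k => E k) k ⟨v k, hv k⟩ with hw
  have h1 : DirectSum.coeLinearMap E w = 0 := by
    rw [hw, map_sum]
    simpa using hsum
  have h2 : w = 0 := hE.injective (by rw [map_zero]; exact h1)
  intro k
  have h3 : w k = ⟨v k, hv k⟩ := by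
    rw [hw, DFinsupp.finset_sum_apply]
    rw [Finset.sum_eq_single k]
    · simp [DirectSum.of_apply]
    · intro j _ hj; simp [DirectSum.of_apply, hj]
    · simp
  rw [h2] at h3
  exact congrArg Subtype.val h3.symm

noncomputable def wedgeNorm (x y : V) : ℝ :=
  Real.sqrt (‖x‖ ^ 2 * ‖y‖ ^ 2 - ⟪x, y⟫ ^ 2)

/-- Lemma 4.1 of the paper. For `x̄, ȳ ∈ P(V) ∖ P(V⁰)` and `0 ≤ i ≤ s`,
`P_{(Vⁱ)^⊥} x̄ = P_{(Vⁱ)^⊥} ȳ` iff `gᵏ(x̄) = gᵏ(ȳ)` for all `0 ≤ k ≤ i`. -/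
theorem stmt8 [FiniteDimensional ℝ V] (hdim : 2 ≤ Module.finrank ℝ V)
    (s : ℕ) (hs : 1 ≤ s) (E : Fin (s+1) → Submodule ℝ V)
    (hE : DirectSum.IsInternal E) (hEne : ∀ k, E k ≠ ⊥)
    (hE0 : Module.finrank ℝ (E 0) = 1)
    (L : Fin (s+1) → V →ₗ[ℝ] V)
    (hL1 : ∀ x : V, ∑ k, L k x = x) (hL2 : ∀ k x, L k x ∈ E k)
    (u₀ : V) (hu₀ : u₀ ∈ E 0) (hu₀n : ‖u₀‖ = 1)
    (f₀ : V →ₗ[ℝ] ℝ) (hf₀ : ∀ x, L 0 x = f₀ x • u₀)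
    (i : ℕ) (hi : i ≤ s)
    (x y : V) (hx : x ≠ 0) (hy : y ≠ 0) (hfx : f₀ x ≠ 0) (hfy : f₀ y ≠ 0) :
    (∃ c : ℝ, c ≠ 0 ∧
        (Submodule.orthogonalProjectionOnto (Vlow E i)ᗮ y : V) =
          c • (Submodule.orthogonalProjectionOnto (Vlow E i)ᗮ x : V)) ↔
      ∀ k : Fin (s+1), (k : ℕ) ≤ i → (f₀ x)⁻¹ • L k x = (f₀ y)⁻¹ • L k y := by
  have hu₀ne : u₀ ≠ 0 := by intro h; rw [h] at hu₀n; simp at hu₀n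
  -- L k restricted to E j is δ_{kj}
  have hproj : ∀ (j : Fin (s+1)) (v : V), v ∈ E j → ∀ k, L k v = if k = j then v else 0 := by
    intro j v hvj
    have := uniq_comp E hE (fun k => L k v - if k = j then v else 0)
      (fun k => by
        by_cases hk : k = j
        · subst hk; simp only [if_pos rfl]; exact Submodule.sub_mem _ (hL2 k v) hvj
        · simp only [if_neg hk, sub_zero]; exact hL2 k v)
      (by
        rw [Finset.sum_sub_distrib, hL1]
        simp [Finset.sum_ite_eq'])
    intro k
    have hk := this k
    simpa [sub_eq_zero] using hk
  -- L k kills Vlow E i for k ≤ i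
  have hker : ∀ k : Fin (s+1), (k : ℕ) ≤ i → Vlow E i ≤ LinearMap.ker (L k) := by
    intro k hk
    refine iSup_le fun j => iSup_le fun hj => fun v hv => ?_
    have hkj : k ≠ j := by
      intro h; rw [h] at hk; omega
    simp [LinearMap.mem_ker, hproj j v hv k, if_neg hkj]
  -- membership in Vlow from vanishing of low components
  have hmem : ∀ z : V, (∀ k : Fin (s+1), (k : ℕ) ≤ i → L k z = 0) → z ∈ Vlow E i := by
    intro z hz
    rw [← hL1 z]
    refine Submodule.sum_mem _ fun k _ => ?_
    by_cases hk : (k : ℕ) ≤ i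
    · rw [hz k hk]; exact Submodule.zero_mem _
    · exact Submodule.mem_iSup_of_mem k (Submodule.mem_iSup_of_mem (not_le.mp hk) (hL2 k z))
  -- kernel of the orthogonal projection
  have hP0 : ∀ z : V, (Submodule.orthogonalProjectionOnto (Vlow E i)ᗮ z : V) = 0 ↔ z ∈ Vlow E i := by
    intro z
    have h1 : Submodule.orthogonalProjectionOnto (Vlow E i)ᗮ z = 0 ↔ z ∈ ((Vlow E i)ᗮ)ᗮ :=
      Submodule.orthogonalProjectionOnto_eq_zero_iff
    rw [Submodule.orthogonal_orthogonal] at h1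
    rw [← h1]
    constructor
    · intro h; ext; simpa using h
    · intro h; rw [h]; simp
  constructor
  · rintro ⟨c, hc, hcxy⟩
    have hdiff : y - c • x ∈ Vlow E i := by
      rw [← hP0]
      push_cast [map_sub, map_smul]
      rw [hcxy]; simp
    have hLk : ∀ k : Fin (s+1), (k : ℕ) ≤ i → L k y = c • L k x := by
      intro k hk
      have := hker k hk hdiff
      rw [LinearMap.mem_ker, map_sub, map_smul, sub_eq_zero] at this
      exact this
    have h0le : ((0 : Fin (s+1)) : ℕ) ≤ i := by simp
    have hf0 : f₀ y = c * f₀ x := by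
      have h := hLk 0 h0le
      rw [hf₀, hf₀, smul_smul] at h
      have := sub_eq_zero.mpr h
      rw [← sub_smul] at this
      rcases smul_eq_zero.mp this with h' | h'
      · linarith [sub_eq_zero.mp (by linarith [h'] : f₀ y - c * f₀ x = 0)]
      · exact absurd h' hu₀ne
    intro k hk
    rw [hLk k hk, hf0, smul_smul]
    congr 1
    field_simp
  · intro h
    refine ⟨f₀ y / f₀ x, div_ne_zero hfy hfx, ?_⟩
    set c := f₀ y / f₀ x with hcdef
    have hLk : ∀ k : Fin (s+1), (k : ℕ) ≤ i → L k y = c • L k x := by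
      intro k hk
      have hk' := h k hk
      have : f₀ y • (f₀ x)⁻¹ • L k x = f₀ y • (f₀ y)⁻¹ • L k y := by rw [hk']
      rw [smul_smul, smul_smul, mul_inv_cancel₀ hfy, one_smul] at this
      rw [← this, hcdef, div_eq_mul_inv]
    have hdiff : y - c • x ∈ Vlow E i := by
      refine hmem _ fun k hk => ?_
      rw [map_sub, map_smul, hLk k hk, sub_self]
    have := (hP0 (y - c • x)).mpr hdiff
    push_cast [map_sub, map_smul] at this
    have h2 := sub_eq_zero.mp this
    simpa using h2
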